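/- Let p be an odd natural number with p ≥ 3. Consider the set of natural numbers m for which there exist a finite set S ⊆ Fin p with |S| = m and a sign sequence ε of length p such that every sign sequence δ of length p agreeing with ε on S satisfies |∑_{i} δ i| ≥ 3. The least element of this set is (p+3)/2. -/

import Mathlib

lemma sum_sub_card_even {p : ℕ} (S : Finset (Fin p)) (ε : Fin p → ℤ)
    (hε : ∀ i, ε i = 1 ∨ ε i = -1) :
    Even ((∑ i ∈ S, ε i) - (S.card : ℤ)) := by
  have : (∑ i ∈ S, ε i) - (S.card : ℤ) = ∑ i ∈ S, (ε i - 1) := by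
    rw [Finset.sum_sub_distrib]; simp
  rw [this]
  apply Finset.even_sum
  intro i _
  rcases hε i with h | h <;> simp [h]

/-- Let `p` be an odd natural number with `p ≥ 3`. The set of natural
numbers `m` for which there exist a finite set `S ⊆ Fin p` with `|S| = m` and a sign
sequence `ε` of length `p` such that every sign sequence `δ` of length `p` agreeing
with `ε` on `S` satisfies `|∑ i, δ i| ≥ 3`, has least element `(p + 3) / 2`. -/
theorem knotting_number_torus_shadow (p : ℕ) (hp : Odd p) (hp3 : 3 ≤ p) :
    IsLeast {m : ℕ | ∃ S : Finset (Fin p), S.card = m ∧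
        ∃ ε : Fin p → ℤ, (∀ i, ε i = 1 ∨ ε i = -1) ∧
          ∀ δ : Fin p → ℤ, (∀ i, δ i = 1 ∨ δ i = -1) →
            (∀ i ∈ S, δ i = ε i) → 3 ≤ |∑ i, δ i|}
      ((p + 3) / 2) := by
  obtain ⟨q, hq⟩ := hp
  have hkey : 2 * ((p + 3) / 2) = p + 3 := by omega
  constructor
  · -- membership
    have hle : (p + 3) / 2 ≤ p := by omega
    obtain ⟨S, hSsub, hScard⟩ := Finset.exists_subset_card_eq (s := (Finset.univ : Finset (Fin p))) (n := (p + 3) / 2) (by simpa using hle)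
    refine ⟨S, hScard, fun _ => 1, fun i => Or.inl rfl, ?_⟩
    intro δ hδ hagree
    have hsplit : (∑ i, δ i) = ∑ i ∈ S, δ i + ∑ i ∈ Sᶜ, δ i :=
      (Finset.sum_add_sum_compl S δ).symm
    have h1 : ∑ i ∈ S, δ i = (S.card : ℤ) := by
      rw [Finset.sum_congr rfl hagree]; simp
    have h2 : (-(Sᶜ.card : ℤ)) ≤ ∑ i ∈ Sᶜ, δ i := by
      have := Finset.sum_le_sum (f := fun i => (-1 : ℤ)) (g := δ) (s := Sᶜ)
        (fun i _ => by rcases hδ i with h | h <;> simp [h])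
      simpa using this
    have hcc : (Sᶜ.card : ℤ) = p - S.card := by
      rw [Finset.card_compl]
      have : S.card ≤ p := by simpa using (Finset.card_le_card hSsub)
      rw [Fintype.card_fin, Nat.cast_sub this]
    have h3 : (3 : ℤ) ≤ ∑ i, δ i := by
      rw [hsplit, h1]
      have : (S.card : ℤ) - Sᶜ.card = 3 := by
        rw [hcc, hScard]
        have : ((p + 3) / 2 : ℕ) * 2 = p + 3 := by omega
        push_cast
        omega
      linarith
    calc (3:ℤ) ≤ ∑ i, δ i := h3
      _ ≤ |∑ i, δ i| := le_abs_self _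
  · -- lower bound
    rintro m ⟨S, hScard, ε, hε, hall⟩
    by_contra hlt
    push_neg at hlt
    have hm : 2 * m ≤ p + 1 := by omega
    have hmp : m ≤ p := by omega
    set s : ℤ := ∑ i ∈ S, ε i with hs
    have habs : |s| ≤ (m : ℤ) := by
      calc |s| ≤ ∑ i ∈ S, |ε i| := Finset.abs_sum_le_sum_abs _ _
        _ = ∑ _i ∈ S, (1 : ℤ) :=
            Finset.sum_congr rfl (fun i _ => by rcases hε i with h | h <;> simp [h])
        _ = (S.card : ℤ) := by simp
        _ = m := by rw [hScard]
    have heven : Even (s - (m : ℤ)) := by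
      have := sum_sub_card_even S ε hε
      rwa [hScard] at this
    set F : ℤ := (p : ℤ) - m with hF
    have hFc : (Sᶜ.card : ℤ) = F := by
      rw [Finset.card_compl, Fintype.card_fin, hScard, Nat.cast_sub hmp]
    have hpar : Even (F + 1 - s) := by
      obtain ⟨c, hc⟩ := heven
      refine ⟨(q : ℤ) + 1 - m - c, ?_⟩
      have : (p : ℤ) = 2 * q + 1 := by exact_mod_cast hq
      rw [hF]; omega
    have hlb : -(F + 1) ≤ s := by
      have : (m : ℤ) ≤ F + 1 := by
        have : (2 : ℤ) * m ≤ p + 1 := by exact_mod_cast hm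
        omega
      have := abs_le.mp habs
      omega
    have hub : s ≤ F + 1 := by
      have h1 : (m : ℤ) ≤ F + 1 := by
        have : (2 : ℤ) * m ≤ p + 1 := by exact_mod_cast hm
        omega
      have := abs_le.mp habs
      omega
    have hF0 : 0 ≤ F := by
      have : (m : ℤ) ≤ p := by exact_mod_cast hmp
      omega
    obtain ⟨k, hk⟩ := hpar
    have hk0 : 0 ≤ k := by omega
    -- t = min (p - m) k.toNat
    set t : ℕ := min (p - m) k.toNat with ht
    have htle : t ≤ Sᶜ.card := by
      have : (Sᶜ.card : ℤ) = F := hFc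
      have : Sᶜ.card = p - m := by omega
      omega
    obtain ⟨U, hUsub, hUcard⟩ := Finset.exists_subset_card_eq (s := Sᶜ) (n := t) htle
    set δ : Fin p → ℤ := fun i => if i ∈ U then 1 else if i ∈ S then ε i else -1 with hδdef
    have hδpm : ∀ i, δ i = 1 ∨ δ i = -1 := by
      intro i
      simp only [hδdef]
      split
      · exact Or.inl rfl
      · split
        · exact hε i
        · exact Or.inr rfl
    have hdisj : ∀ i ∈ S, i ∉ U := by
      intro i hi hiU
      exact (Finset.mem_compl.mp (hUsub hiU)) hi
    have hagree : ∀ i ∈ S, δ i = ε i := by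
      intro i hi
      simp only [hδdef, if_neg (hdisj i hi), if_pos hi]
    have hsum : (∑ i, δ i) = s + 2 * t - F := by
      rw [← Finset.sum_add_sum_compl S δ]
      have h1 : ∑ i ∈ S, δ i = s := Finset.sum_congr rfl hagree
      have h2 : ∑ i ∈ Sᶜ, δ i = t - (F - t) := by
        rw [← Finset.sum_sdiff hUsub]
        have ha : ∑ i ∈ U, δ i = (t : ℤ) := by
          have : ∑ i ∈ U, δ i = ∑ _i ∈ U, (1 : ℤ) :=
            Finset.sum_congr rfl (fun i hi => by simp only [hδdef, if_pos hi])
          rw [this, Finset.sum_const, hUcard]; simp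
        have hb : ∑ i ∈ Sᶜ \ U, δ i = -(F - t) := by
          have : ∀ i ∈ Sᶜ \ U, δ i = -1 := by
            intro i hi
            rw [Finset.mem_sdiff, Finset.mem_compl] at hi
            simp only [hδdef, if_neg hi.2, if_neg hi.1]
          have h4 : ∑ i ∈ Sᶜ \ U, δ i = ∑ _i ∈ Sᶜ \ U, (-1 : ℤ) := Finset.sum_congr rfl this
          rw [h4, Finset.sum_const, Finset.card_sdiff_of_subset hUsub, hUcard]
          have : ((Sᶜ.card - t : ℕ) : ℤ) = F - t := by
            rw [Nat.cast_sub htle, hFc]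
          simp [this]
        rw [ha, hb]; ring
      rw [h1, h2]; ring
    have hfinal : |∑ i, δ i| ≤ 1 := by
      rw [hsum]
      rcases le_or_gt k (F) with hkF | hkF
      · -- t = k.toNat, 2t = F + 1 - s
        have htk : (t : ℤ) = k := by
          have h1 : (k.toNat : ℤ) = k := Int.toNat_of_nonneg hk0
          have h2 : ((p - m : ℕ) : ℤ) = F := by rw [Nat.cast_sub hmp, hF]
          have : t = k.toNat := by
            rw [ht]; apply min_eq_right; omega
          rw [this, h1]
        have : s + 2 * (t : ℤ) - F = 1 := by rw [htk]; omega
        rw [this]; norm_num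
      · -- k > F: s = -F - 1, t = p - m, total = -1
        have hsval : s = -F - 1 := by omega
        have htF : (t : ℤ) = F := by
          have h2 : ((p - m : ℕ) : ℤ) = F := by rw [Nat.cast_sub hmp, hF]
          have : t = p - m := by rw [ht]; apply min_eq_left; omega
          rw [this, h2]
        rw [hsval, htF]
        have : -F - 1 + 2 * F - F = -1 := by ring
        rw [this]; norm_num
    have := hall δ hδpm hagree
    omega
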